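/- Let G be the group presented by ⟨α, β, γ | β^{2k'} = 1, γ² = β^{k'}, βγ = γβ^{-1}, α^k = 1, αβ = βα, αγ = β^a γα⟩ with a = 2m even. Then the subgroup D = ⟨β, γ⟩ is normal in G, the subgroup Z = ⟨α⟩ satisfies D ∩ Z = 1 and DZ = G, so G is an internal semidirect product Z_k ⋉ D_{k'}. -/

import Mathlib

open Pointwise

/-- Relators of the group
`G(a) = ⟨α, β, γ | β^{2k'} = 1, γ² = β^{k'}, βγ = γβ⁻¹, α^k = 1, αβ = βα, αγ = β^a γα⟩`
with `a = 2m` (generators: `0 ↦ α`, `1 ↦ β`, `2 ↦ γ`). -/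
def GaRels (k k' a : ℕ) : Set (FreeGroup (Fin 3)) :=
  {FreeGroup.of 1 ^ (2 * k'),
   FreeGroup.of 2 ^ 2 * (FreeGroup.of 1 ^ k')⁻¹,
   FreeGroup.of 1 * FreeGroup.of 2 * FreeGroup.of 1 * (FreeGroup.of 2)⁻¹,
   FreeGroup.of 0 ^ k,
   FreeGroup.of 0 * FreeGroup.of 1 * (FreeGroup.of 1 * FreeGroup.of 0)⁻¹,
   FreeGroup.of 0 * FreeGroup.of 2 *
     (FreeGroup.of 1 ^ a * FreeGroup.of 2 * FreeGroup.of 0)⁻¹}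

section lemmas
variable {k k' a : ℕ}

lemma Ga_rel_one {r : FreeGroup (Fin 3)} (h : r ∈ GaRels k k' a) :
    PresentedGroup.mk (GaRels k k' a) r = 1 := by
  rw [← MonoidHom.mem_ker, PresentedGroup.mk]
  show r ∈ (QuotientGroup.mk' _).ker
  rw [QuotientGroup.ker_mk']
  exact Subgroup.subset_normalClosure h

lemma Ga_alphak : (PresentedGroup.of 0 : PresentedGroup (GaRels k k' a)) ^ k = 1 := by
  have h : PresentedGroup.mk (GaRels k k' a) (FreeGroup.of 0) ^ k = 1 := by
    simpa using Ga_rel_one (k := k) (k' := k') (a := a) (r := FreeGroup.of 0 ^ k)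
      (by simp [GaRels])
  exact h

lemma Ga_ab : (PresentedGroup.of 0 : PresentedGroup (GaRels k k' a)) * PresentedGroup.of 1
    = PresentedGroup.of 1 * PresentedGroup.of 0 := by
  have := Ga_rel_one (k := k) (k' := k') (a := a)
    (r := FreeGroup.of 0 * FreeGroup.of 1 * (FreeGroup.of 1 * FreeGroup.of 0)⁻¹)
    (by simp [GaRels])
  simp only [map_mul, map_inv] at this
  rw [mul_inv_eq_one] at this
  exact this

lemma Ga_ac : (PresentedGroup.of 0 : PresentedGroup (GaRels k k' a)) * PresentedGroup.of 2
    = PresentedGroup.of 1 ^ a * PresentedGroup.of 2 * PresentedGroup.of 0 := by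
  have := Ga_rel_one (k := k) (k' := k') (a := a)
    (r := FreeGroup.of 0 * FreeGroup.of 2 *
      (FreeGroup.of 1 ^ a * FreeGroup.of 2 * FreeGroup.of 0)⁻¹)
    (by simp [GaRels])
  simp only [map_mul, map_inv, map_pow] at this
  rw [mul_inv_eq_one] at this
  exact this

end lemmas

/-- In `G(a)` with `a = 2m` even, the subgroup `D = ⟨β, γ⟩` is normal, the
subgroup `Z = ⟨α⟩` satisfies `D ∩ Z = 1` and `DZ = G`; hence `G(a)` is the
internal semidirect product `Z_k ⋉ D_{k'}`. -/
theorem Ga_internal_semidirect (k k' m : ℕ) (hk : 1 ≤ k) (hk' : 1 ≤ k') :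
    (Subgroup.closure
        ({PresentedGroup.of 1, PresentedGroup.of 2} :
          Set (PresentedGroup (GaRels k k' (2 * m))))).Normal ∧
    Subgroup.closure
        ({PresentedGroup.of 1, PresentedGroup.of 2} :
          Set (PresentedGroup (GaRels k k' (2 * m)))) ⊓
      Subgroup.closure {PresentedGroup.of 0} = ⊥ ∧
    (Subgroup.closure
        ({PresentedGroup.of 1, PresentedGroup.of 2} :
          Set (PresentedGroup (GaRels k k' (2 * m)))) :
        Set (PresentedGroup (GaRels k k' (2 * m)))) *
      ((Subgroup.closure
          ({PresentedGroup.of 0} : Set (PresentedGroup (GaRels k k' (2 * m)))) :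
          Subgroup (PresentedGroup (GaRels k k' (2 * m)))) :
        Set (PresentedGroup (GaRels k k' (2 * m)))) = Set.univ := by
  set G := PresentedGroup (GaRels k k' (2 * m)) with hG
  set A : G := PresentedGroup.of 0 with hA
  set B : G := PresentedGroup.of 1 with hB
  set C : G := PresentedGroup.of 2 with hC
  set D : Subgroup G := Subgroup.closure {B, C} with hD
  set Z : Subgroup G := Subgroup.closure {A} with hZ
  have hBD : B ∈ D := Subgroup.subset_closure (Set.mem_insert _ _)
  have hCD : C ∈ D := Subgroup.subset_closure (Set.mem_insert_of_mem _ rfl)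
  have hab : A * B = B * A := Ga_ab
  have hac : A * C = B ^ (2 * m) * C * A := Ga_ac
  have hcomm : Commute A (B ^ (2 * m)) := (Commute.pow_right hab (2 * m))
  -- conjugation formulas
  have hABA : A * B * A⁻¹ = B := by rw [hab]; group
  have hACA : A * C * A⁻¹ = B ^ (2 * m) * C := by rw [hac]; group
  have hABA' : A⁻¹ * B * A = B := by rw [mul_assoc, ← hab]; group
  have hACA' : A⁻¹ * C * A = (B ^ (2 * m))⁻¹ * C := by
    calc A⁻¹ * C * A = A⁻¹ * (B ^ (2 * m))⁻¹ * (B ^ (2 * m) * C * A) := by group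
      _ = A⁻¹ * (B ^ (2 * m))⁻¹ * (A * C) := by rw [← hac]
      _ = A⁻¹ * ((B ^ (2 * m))⁻¹ * A) * C := by group
      _ = A⁻¹ * (A * (B ^ (2 * m))⁻¹) * C := by rw [hcomm.inv_right.eq]
      _ = (B ^ (2 * m))⁻¹ * C := by group
  -- generic: if g conjugates the generators of D into D, it conjugates all of D into D
  have key : ∀ g : G, g * B * g⁻¹ ∈ D → g * C * g⁻¹ ∈ D → ∀ d ∈ D, g * d * g⁻¹ ∈ D := by
    intro g h1 h2 d hd
    have hmap : D.map (MulAut.conj g).toMonoidHom ≤ D := by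
      rw [hD, MonoidHom.map_closure]
      refine (Subgroup.closure_le _).mpr ?_
      rintro x ⟨y, hy, rfl⟩
      rcases hy with rfl | rfl
      · simpa [MulAut.conj] using h1
      · simp at *; simpa [MulAut.conj] using h2
    exact hmap ⟨d, hd, by simp [MulAut.conj]⟩
  have hDnormal : D.Normal := by
    rw [← Subgroup.normalizer_eq_top_iff]
    rw [eq_top_iff, ← PresentedGroup.closure_range_of (GaRels k k' (2 * m))]
    refine (Subgroup.closure_le _).mpr ?_
    rintro _ ⟨x, rfl⟩
    have hAnorm : A ∈ Subgroup.normalizer (D : Set G) := by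
      rw [Subgroup.mem_normalizer_iff]
      intro n
      constructor
      · intro hn
        exact key A (by rw [hABA]; exact hBD)
          (by rw [hACA]; exact Subgroup.mul_mem _ (Subgroup.pow_mem _ hBD _) hCD) n hn
      · intro hn
        have h3 := key A⁻¹ (by rw [inv_inv, hABA']; exact hBD)
          (by rw [inv_inv, hACA']
              exact Subgroup.mul_mem _ (Subgroup.inv_mem _ (Subgroup.pow_mem _ hBD _)) hCD)
          _ hn
        have h4 : A⁻¹ * (A * n * A⁻¹) * A⁻¹⁻¹ = n := by group
        rwa [h4] at h3
    fin_cases x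
    · exact hAnorm
    · exact Subgroup.le_normalizer hBD
    · exact Subgroup.le_normalizer hCD
  refine ⟨hDnormal, ?_, ?_⟩
  · -- D ⊓ Z = ⊥, via the homomorphism to ZMod k
    set f : Fin 3 → Multiplicative (ZMod k) := ![Multiplicative.ofAdd 1, 1, 1] with hf
    have hrels : ∀ r ∈ GaRels k k' (2 * m), FreeGroup.lift f r = 1 := by
      intro r hr
      rcases hr with rfl | rfl | rfl | rfl | rfl | rfl <;>
        simp [hf, map_mul, map_pow, map_inv, ← ofAdd_nsmul, ZMod.natCast_self]
    set π : G →* Multiplicative (ZMod k) := PresentedGroup.toGroup hrels with hπ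
    have hπA : π A = Multiplicative.ofAdd 1 := PresentedGroup.toGroup.of hrels
    have hDker : D ≤ π.ker := by
      rw [hD]
      refine (Subgroup.closure_le _).mpr ?_
      rintro x (rfl | rfl)
      · exact (PresentedGroup.toGroup.of hrels (x := 1)).trans (by simp [hf])
      · exact (PresentedGroup.toGroup.of hrels (x := 2)).trans (by simp [hf])
    rw [eq_bot_iff]
    rintro x ⟨hxD, hxZ⟩
    obtain ⟨n, rfl⟩ := Subgroup.mem_closure_singleton.mp hxZ
    have h1 : π (A ^ n) = 1 := hDker hxD
    rw [map_zpow, hπA, ← ofAdd_zsmul] at h1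
    have h2 : ((n : ℤ) : ZMod k) = 0 := by
      have := ofAdd_eq_one.mp h1
      simpa using this
    obtain ⟨t, ht⟩ := (ZMod.intCast_zmod_eq_zero_iff_dvd n k).mp h2
    have hAk : A ^ (k : ℤ) = 1 := by rw [zpow_natCast]; exact Ga_alphak
    have : A ^ n = 1 := by rw [ht, zpow_mul, hAk, one_zpow]
    simp [this, Subgroup.mem_bot]
  · -- D * Z = univ
    have h1 : (↑(D ⊔ Z) : Set G) = ↑D * ↑Z := Subgroup.normal_mul D Z
    have h2 : D ⊔ Z = ⊤ := by
      rw [eq_top_iff, ← PresentedGroup.closure_range_of (GaRels k k' (2 * m))]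
      refine (Subgroup.closure_le _).mpr ?_
      rintro _ ⟨x, rfl⟩
      fin_cases x
      · exact Subgroup.mem_sup_right (Subgroup.subset_closure rfl)
      · exact Subgroup.mem_sup_left hBD
      · exact Subgroup.mem_sup_left hCD
    rw [← h1, h2]
    rfl
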